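/- For a Tweedie distribution with α < 0 and θ > 0, define L(λ) = ((1-α)/α)·((θ+λ)/(1-α))^α - ((1-α)/α)·(θ/(1-α))^α and L₀(λ) = λ·L'(λ) = (1-α)^{1-α}·λ·(θ+λ)^{α-1}. Then L₀'(λ) = (1-α)^{1-α}(θ+λ)^{α-2}(θ + λα), which is negative for λ > -θ/α and positive for 0 < λ < -θ/α; in particular L₀' is not nonnegative on all of (0,∞), so L₀' is not completely monotone. -/

import Mathlib

/-- For a Tweedie distribution with α < 0 and θ > 0, with
L₀(λ) = (1-α)^{1-α}·λ·(θ+λ)^{α-1}, the derivative is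
L₀'(λ) = (1-α)^{1-α}(θ+λ)^{α-2}(θ+λα), which is negative for λ > -θ/α and
positive for 0 < λ < -θ/α; in particular L₀' is not nonnegative on all of
(0,∞), so L₀' is not completely monotone. -/
theorem tweedie_not_self_decomposable (α θ : ℝ) (hα : α < 0) (hθ : 0 < θ)
    (L₀ : ℝ → ℝ)
    (hL₀ : ∀ l : ℝ, L₀ l = (1 - α) ^ (1 - α) * l * (θ + l) ^ (α - 1)) :
    (∀ l : ℝ, 0 < l →
      deriv L₀ l = (1 - α) ^ (1 - α) * (θ + l) ^ (α - 2) * (θ + l * α)) ∧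
    (∀ l : ℝ, -θ / α < l → deriv L₀ l < 0) ∧
    (∀ l : ℝ, 0 < l → l < -θ / α → 0 < deriv L₀ l) ∧
    ¬(∀ l : ℝ, 0 < l → 0 ≤ deriv L₀ l) := by
  have hα' : (α : ℝ) ≠ 0 := ne_of_lt hα
  have hc : (0:ℝ) < (1 - α) ^ (1 - α) := Real.rpow_pos_of_pos (by linarith) _
  have hcrit : (0:ℝ) < -θ / α := div_pos_of_neg_of_neg (by linarith) hα
  have key : ∀ l : ℝ, 0 < l →
      deriv L₀ l = (1 - α) ^ (1 - α) * (θ + l) ^ (α - 2) * (θ + l * α) := by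
    intro l hl
    have hθl : (0:ℝ) < θ + l := by linarith
    have hfun : L₀ = fun x : ℝ => (1 - α) ^ (1 - α) * x * (θ + x) ^ (α - 1) :=
      funext hL₀
    have h1 : HasDerivAt (fun x : ℝ => (θ + x) ^ (α - 1))
        ((α - 1) * (θ + l) ^ (α - 1 - 1) * 1) l := by
      exact (Real.hasDerivAt_rpow_const (Or.inl hθl.ne')).comp l
        ((hasDerivAt_id l).const_add θ)
    have h2 : HasDerivAt (fun x : ℝ => (1 - α) ^ (1 - α) * x)
        ((1 - α) ^ (1 - α)) l := by
      simpa using (hasDerivAt_id l).const_mul ((1 - α) ^ (1 - α))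
    have h3 : HasDerivAt (fun x : ℝ => (1 - α) ^ (1 - α) * x * (θ + x) ^ (α - 1)) _ l :=
      h2.mul h1
    rw [hfun, h3.deriv]
    have hsplit : (θ + l) ^ (α - 1) = (θ + l) ^ (α - 2) * (θ + l) := by
      rw [← Real.rpow_add_one hθl.ne' (α - 2)]
      ring_nf
    have hsplit2 : (θ + l) ^ (α - 1 - 1) = (θ + l) ^ (α - 2) := by norm_num [sub_sub]
    rw [hsplit, hsplit2]
    ring
  refine ⟨key, ?_, ?_, ?_⟩
  · intro l hl
    have hl0 : 0 < l := lt_trans hcrit hl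
    rw [key l hl0]
    have hθl : (0:ℝ) < θ + l := by linarith
    have hneg : θ + l * α < 0 := by
      have := (div_lt_iff_of_neg hα).mp hl
      linarith
    exact mul_neg_of_pos_of_neg (by positivity) hneg
  · intro l hl0 hl
    rw [key l hl0]
    have hθl : (0:ℝ) < θ + l := by linarith
    have hpos : 0 < θ + l * α := by
      have := (lt_div_iff_of_neg hα).mp hl
      linarith
    positivity
  · intro h
    have hl0 : 0 < -θ / α + 1 := by linarith
    have := h _ hl0
    have hlt : deriv L₀ (-θ / α + 1) < 0 := by
      rw [key _ hl0]
      have hθl : (0:ℝ) < θ + (-θ / α + 1) := by linarith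
      have hneg : θ + (-θ / α + 1) * α < 0 := by
        have : -θ / α * α = -θ := div_mul_cancel₀ _ hα'
        nlinarith
      exact mul_neg_of_pos_of_neg (by positivity) hneg
    linarith
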